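/- Each subfiltration step Fil^{r,s}(V_g(O)) is stable under the action of S_0(p). -/

import Mathlib

open MvPolynomial

/-- The right action of an integral 2×2 matrix `γ = [[a,b],[c,d]]` on polynomials in
`X = X 0`, `Y = X 1`: `(P|γ)(X,Y) = P(dX - cY, -bX + aY)`. -/
noncomputable def matAct {R : Type*} [CommRing R] (γ : Matrix (Fin 2) (Fin 2) ℤ)
    (P : MvPolynomial (Fin 2) R) : MvPolynomial (Fin 2) R :=
  MvPolynomial.aeval
    ![γ 1 1 • MvPolynomial.X 0 - γ 1 0 • MvPolynomial.X 1,
      -(γ 0 1 • MvPolynomial.X 0) + γ 0 0 • MvPolynomial.X 1] P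

/-- The semigroup `S_0(p)`. -/
def memS0 (p : ℕ) (γ : Matrix (Fin 2) (Fin 2) ℤ) : Prop :=
  γ.det ≠ 0 ∧ (p : ℤ) ∣ γ 1 0 ∧ ¬ (p : ℤ) ∣ γ 0 0

/-- Membership in `Fil^r(V_g(O)) = { Σ b_j X^j Y^{g-j} : p^{r-j} ∣ b_j for 0 ≤ j ≤ r-1 }`:
the coefficient `b_j` of `X^j Y^{g-j}` is divisible by `p^{r-j}` for `j < r`. -/
def inFil (O : Type*) [CommRing O] (p g r : ℕ) (P : MvPolynomial (Fin 2) O) : Prop :=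
  ∀ j < r, (p : O) ^ (r - j) ∣
    MvPolynomial.coeff (Finsupp.single (0 : Fin 2) j + Finsupp.single (1 : Fin 2) (g - j)) P

/-- Membership in `Fil^{r,s}(V_g(O))`. -/
def inFilRS (O : Type*) [CommRing O] (p g r s : ℕ) (P : MvPolynomial (Fin 2) O) : Prop :=
  inFil O p g r P ∧ ∀ j, r + 1 - s ≤ j → j ≤ r → (p : O) ^ (r - j + 1) ∣
    MvPolynomial.coeff (Finsupp.single (0 : Fin 2) j + Finsupp.single (1 : Fin 2) (g - j)) P

/- ### Auxiliary lemmas -/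

lemma finsupp_rep (m : Fin 2 →₀ ℕ) :
    m = Finsupp.single (0 : Fin 2) (m 0) + Finsupp.single (1 : Fin 2) (m 1) := by
  ext i
  fin_cases i <;> simp [Finsupp.single_apply]

lemma degree_two (m : Fin 2 →₀ ℕ) : m.degree = m 0 + m 1 := by
  rw [Finsupp.degree_apply,
    Finset.sum_subset (Finset.subset_univ m.support)
      (fun i _ hi => Finsupp.notMem_support_iff.mp hi),
    Fin.sum_univ_two]

/-- The key divisibility: the coefficient of `X^k Y^m` in `(dX - cY)^j * w` is divisible
by `c^(j-k)`. -/
lemma key_dvd {O : Type*} [CommRing O] (c d : O) (w : MvPolynomial (Fin 2) O) :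
    ∀ j k m : ℕ, c ^ (j - k) ∣
      MvPolynomial.coeff (Finsupp.single (0 : Fin 2) k + Finsupp.single (1 : Fin 2) m)
        ((C d * X 0 - C c * X 1) ^ j * w)
  | 0, k, m => by rw [Nat.zero_sub, pow_zero]; exact one_dvd _
  | j+1, k, m => by
    have hrw : (C d * X (0 : Fin 2) - C c * X 1) ^ (j+1) * w
        = C d * (X 0 * ((C d * X 0 - C c * X 1) ^ j * w))
          - C c * (X 1 * ((C d * X 0 - C c * X 1) ^ j * w)) := by ring
    rw [hrw, coeff_sub, coeff_C_mul, coeff_C_mul]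
    set Q := (C d * X (0 : Fin 2) - C c * X 1) ^ j * w with hQ
    have hX0 : c ^ (j + 1 - k) ∣
        d * MvPolynomial.coeff (Finsupp.single (0 : Fin 2) k + Finsupp.single (1 : Fin 2) m)
          (X 0 * Q) := by
      rcases k with _ | k'
      · have h0 : MvPolynomial.coeff
            (Finsupp.single (0 : Fin 2) 0 + Finsupp.single (1 : Fin 2) m) (X 0 * Q) = 0 := by
          rw [coeff_X_mul']
          simp [Finsupp.single_apply]
        rw [h0, mul_zero]
        exact dvd_zero _
      · have hμ : Finsupp.single (0 : Fin 2) (k'+1) + Finsupp.single (1 : Fin 2) m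
            = Finsupp.single (0 : Fin 2) 1 +
              (Finsupp.single (0 : Fin 2) k' + Finsupp.single (1 : Fin 2) m) := by
          ext i; fin_cases i <;> simp [Finsupp.single_apply] <;> omega
        rw [hμ, coeff_X_mul, Nat.succ_sub_succ]
        exact (key_dvd c d w j k' m).mul_left d
    have hX1 : c ^ (j + 1 - k) ∣
        c * MvPolynomial.coeff (Finsupp.single (0 : Fin 2) k + Finsupp.single (1 : Fin 2) m)
          (X 1 * Q) := by
      rcases m with _ | m'
      · have h0 : MvPolynomial.coeff
            (Finsupp.single (0 : Fin 2) k + Finsupp.single (1 : Fin 2) 0) (X 1 * Q) = 0 := by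
          rw [coeff_X_mul']
          simp [Finsupp.single_apply]
        rw [h0, mul_zero]
        exact dvd_zero _
      · have hμ : Finsupp.single (0 : Fin 2) k + Finsupp.single (1 : Fin 2) (m'+1)
            = Finsupp.single (1 : Fin 2) 1 +
              (Finsupp.single (0 : Fin 2) k + Finsupp.single (1 : Fin 2) m') := by
          ext i; fin_cases i <;> simp [Finsupp.single_apply] <;> omega
        rw [hμ, coeff_X_mul]
        refine (pow_dvd_pow c (show j + 1 - k ≤ (j - k) + 1 by omega)).trans ?_
        rw [pow_succ']
        exact mul_dvd_mul_left c (key_dvd c d w j k m')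
    exact dvd_sub hX0 hX1

lemma zsmul_C {O : Type*} [CommRing O] (z : ℤ) (Q : MvPolynomial (Fin 2) O) :
    z • Q = C ((z : O)) * Q := by
  rw [zsmul_eq_mul, map_intCast (C : O →+* MvPolynomial (Fin 2) O)]

lemma combine_dvd {O : Type*} [CommRing O] (q x y : O) (e1 e2 n : ℕ)
    (h1 : q ^ e1 ∣ x) (h2 : q ^ e2 ∣ y) (h : n ≤ e1 + e2) : q ^ n ∣ x * y :=
  (pow_dvd_pow q h).trans (by rw [pow_add]; exact mul_dvd_mul h1 h2)

/-- Each subfiltration step `Fil^{r,s}(V_g(O))` is stable under the action of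
`S_0(p)`. -/
theorem filRS_stable (p g r s : ℕ) (hp : p.Prime) (hs : s ≤ r)
    (O : Type*) [CommRing O]
    (γ : Matrix (Fin 2) (Fin 2) ℤ) (hγ : memS0 p γ)
    (P : MvPolynomial (Fin 2) O) (hP : P.IsHomogeneous g) (hfil : inFilRS O p g r s P) :
    (matAct γ P).IsHomogeneous g ∧ inFilRS O p g r s (matAct γ P) := by
  obtain ⟨-, hc, -⟩ := hγ
  set a : O := ((γ 0 0 : ℤ) : O) with ha'
  set b : O := ((γ 0 1 : ℤ) : O) with hb'
  set c : O := ((γ 1 0 : ℤ) : O) with hc'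
  set d : O := ((γ 1 1 : ℤ) : O) with hd'
  set v : Fin 2 → MvPolynomial (Fin 2) O :=
    ![C d * X 0 - C c * X 1, -(C b * X 0) + C a * X 1] with hv
  have hvect : (![γ 1 1 • MvPolynomial.X 0 - γ 1 0 • MvPolynomial.X 1,
      -(γ 0 1 • MvPolynomial.X 0) + γ 0 0 • MvPolynomial.X 1] :
        Fin 2 → MvPolynomial (Fin 2) O) = v := by
    funext i
    fin_cases i <;>
      simp [hv, zsmul_C, ha', hb', hc', hd']
  have hact : matAct γ P = MvPolynomial.aeval v P := by
    rw [matAct, hvect]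
  -- homogeneity
  have hhomog : (matAct γ P).IsHomogeneous g := by
    rw [hact]
    have := hP.aeval v (n := 1) (fun i => by
      fin_cases i
      · exact (isHomogeneous_C_mul_X d 0).sub (isHomogeneous_C_mul_X c 1)
      · exact ((isHomogeneous_C_mul_X b 0).neg).add (isHomogeneous_C_mul_X a 1))
    simpa using this
  -- coefficient expansion
  have hpc : (p : O) ∣ c := by
    obtain ⟨t, ht⟩ := hc
    exact ⟨((t : ℤ) : O), by rw [hc', ht]; push_cast; ring⟩
  have hcoeff : ∀ t : Fin 2 →₀ ℕ,
      MvPolynomial.coeff t (matAct γ P)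
        = ∑ m ∈ P.support, MvPolynomial.coeff m P *
            MvPolynomial.coeff t ((C d * X 0 - C c * X 1) ^ (m 0) *
              (-(C b * X 0) + C a * X 1) ^ (m 1)) := by
    intro t
    rw [hact, aeval_def, eval₂_eq, coeff_sum]
    refine Finset.sum_congr rfl fun m _ => ?_
    have hprod : (∏ i ∈ m.support, v i ^ m i)
        = (C d * X 0 - C c * X 1) ^ (m 0) * (-(C b * X 0) + C a * X 1) ^ (m 1) := by
      rw [Finset.prod_subset (Finset.subset_univ m.support)
        (fun i _ hi => by rw [Finsupp.notMem_support_iff.mp hi, pow_zero]),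
        Fin.prod_univ_two]
      simp [hv]
    rw [hprod, algebraMap_eq, coeff_C_mul]
  -- degree of support elements
  have hdeg : ∀ m ∈ P.support, m 0 + m 1 = g := by
    intro m hm
    by_contra h
    exact (MvPolynomial.mem_support_iff.mp hm)
      (hP.coeff_eq_zero (by rw [degree_two]; exact h))
  have hkey : ∀ (k : ℕ) (m : Fin 2 →₀ ℕ), (p : O) ^ (m 0 - k) ∣
      MvPolynomial.coeff (Finsupp.single (0 : Fin 2) k + Finsupp.single (1 : Fin 2) (g - k))
        ((C d * X 0 - C c * X 1) ^ (m 0) * (-(C b * X 0) + C a * X 1) ^ (m 1)) := by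
    intro k m
    exact (pow_dvd_pow_of_dvd hpc _).trans (key_dvd c d _ (m 0) k (g - k))
  have hcoeffP : ∀ m ∈ P.support, ∀ e1 : ℕ,
      ((p : O) ^ e1 ∣ MvPolynomial.coeff (Finsupp.single (0 : Fin 2) (m 0) +
        Finsupp.single (1 : Fin 2) (g - m 0)) P) →
      (p : O) ^ e1 ∣ MvPolynomial.coeff m P := by
    intro m hm e1 h
    have h1 : m 1 = g - m 0 := by have := hdeg m hm; omega
    rw [finsupp_rep m, h1]
    exact h
  refine ⟨hhomog, ?_, ?_⟩
  · -- inFil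
    intro k hk
    rw [hcoeff]
    refine Finset.dvd_sum fun m hm => ?_
    by_cases hj : m 0 < r
    · exact combine_dvd _ _ _ (r - m 0) (m 0 - k) _
        (hcoeffP m hm _ (hfil.1 (m 0) hj)) (hkey k m) (by omega)
    · exact combine_dvd _ _ _ 0 (m 0 - k) _ (by simp) (hkey k m) (by omega)
  · -- second condition
    intro k hk1 hk2
    rw [hcoeff]
    refine Finset.dvd_sum fun m hm => ?_
    rcases lt_or_ge (m 0) (r + 1 - s) with hj | hj
    · have hjr : m 0 < r := by omega
      exact combine_dvd _ _ _ (r - m 0) (m 0 - k) _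
        (hcoeffP m hm _ (hfil.1 (m 0) hjr)) (hkey k m) (by omega)
    · rcases le_or_gt (m 0) r with hjr | hjr
      · exact combine_dvd _ _ _ (r - m 0 + 1) (m 0 - k) _
          (hcoeffP m hm _ (hfil.2 (m 0) hj hjr)) (hkey k m) (by omega)
      · exact combine_dvd _ _ _ 0 (m 0 - k) _ (by simp) (hkey k m) (by omega)
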